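/- Let N ≥ 2 and let p, q > N be coprime integers. Define r = ∏_P r_P, the product over the distinct primes P dividing 2N, where r_P = 1 if P divides pq and r_P = P otherwise. Then gcd(rp − q, 2N) = 1 and gcd(r²p + q, 2N) = 1; in particular, a pq-admissible integer always exists. -/

import Mathlib

theorem statement14 (N p q : ℕ) (hN : 2 ≤ N) (hp : N < p) (hq : N < q)
    (hco : Nat.Coprime p q)
    (r : ℕ) (hr : r = ∏ P ∈ (2 * N).primeFactors, (if P ∣ p * q then 1 else P)) :
    (Int.gcd ((r : ℤ) * p - q) (2 * N) = 1 ∧ Int.gcd ((r : ℤ) ^ 2 * p + q) (2 * N) = 1) ∧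
    ∃ s : ℤ, Int.gcd (s * p - q) (2 * N) = 1 ∧ Int.gcd (s ^ 2 * p + q) (2 * N) = 1 := by
  have h2N : 2 * N ≠ 0 := by omega
  -- r is divisible by exactly those primes of 2N not dividing pq
  have hrdvd : ∀ P : ℕ, P.Prime → P ∣ 2 * N → ¬ P ∣ p * q → P ∣ r := by
    intro P hP hdvd hnd
    rw [hr]
    have hmem : P ∈ (2 * N).primeFactors := Nat.mem_primeFactors.mpr ⟨hP, hdvd, h2N⟩
    have := Finset.dvd_prod_of_mem (fun Q => if Q ∣ p * q then 1 else Q) hmem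
    simpa [hnd] using this
  have hrnd : ∀ P : ℕ, P.Prime → P ∣ p * q → ¬ P ∣ r := by
    intro P hP hpq hdvd
    rw [hr] at hdvd
    obtain ⟨Q, hQmem, hQd⟩ := (Prime.dvd_finset_prod_iff hP.prime _).mp hdvd
    by_cases hc : Q ∣ p * q
    · simp only [hc, if_true, Nat.dvd_one] at hQd
      exact hP.ne_one hQd
    · simp only [hc, if_false] at hQd
      have hQp : Q.Prime := Nat.prime_of_mem_primeFactors hQmem
      have : P = Q := (Nat.prime_dvd_prime_iff_eq hP hQp).mp hQd
      exact hc (this ▸ hpq)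
  have key : ∀ P : ℕ, P.Prime → P ∣ 2 * N →
      ¬ (P : ℤ) ∣ ((r : ℤ) * p - q) ∧ ¬ (P : ℤ) ∣ ((r : ℤ) ^ 2 * p + q) := by
    intro P hP hdvd
    by_cases hpq : P ∣ p * q
    · rcases (Nat.Prime.dvd_mul hP).mp hpq with hPp | hPq
      · have hPq' : ¬ P ∣ q := by
          intro h
          exact hP.ne_one (Nat.eq_one_of_dvd_one (hco ▸ Nat.dvd_gcd hPp h))
        have hrp : (P : ℤ) ∣ (r : ℤ) * p := Dvd.dvd.mul_left (Int.natCast_dvd_natCast.mpr hPp) _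
        constructor
        · intro h
          have : (P : ℤ) ∣ (q : ℤ) := by
            have := dvd_sub hrp h
            simpa using this
          exact hPq' (Int.natCast_dvd_natCast.mp this)
        · intro h
          have hrp2 : (P : ℤ) ∣ (r : ℤ) ^ 2 * p :=
            Dvd.dvd.mul_left (Int.natCast_dvd_natCast.mpr hPp) _
          have : (P : ℤ) ∣ (q : ℤ) := by
            have := dvd_sub h hrp2
            simpa using this
          exact hPq' (Int.natCast_dvd_natCast.mp this)
      · have hPp' : ¬ P ∣ p := by
          intro h
          exact hP.ne_one (Nat.eq_one_of_dvd_one (hco ▸ Nat.dvd_gcd h hPq))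
        have hPr : ¬ P ∣ r := hrnd P hP hpq
        have hprime : Prime (P : ℤ) := Nat.prime_iff_prime_int.mp hP
        have hPq'' : (P : ℤ) ∣ (q : ℤ) := Int.natCast_dvd_natCast.mpr hPq
        constructor
        · intro h
          have hrp : (P : ℤ) ∣ (r : ℤ) * p := by
            have := dvd_add h hPq''
            simpa using this
          rcases hprime.dvd_mul.mp hrp with h1 | h2
          · exact hPr (Int.natCast_dvd_natCast.mp h1)
          · exact hPp' (Int.natCast_dvd_natCast.mp h2)
        · intro h
          have hrp : (P : ℤ) ∣ (r : ℤ) ^ 2 * p := by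
            have := dvd_sub h hPq''
            simpa using this
          rcases hprime.dvd_mul.mp hrp with h1 | h2
          · exact hPr (Int.natCast_dvd_natCast.mp (hprime.dvd_of_dvd_pow h1))
          · exact hPp' (Int.natCast_dvd_natCast.mp h2)
    · have hPr : P ∣ r := hrdvd P hP hdvd hpq
      have hPq' : ¬ P ∣ q := fun h => hpq (h.mul_left p)
      have hrp : (P : ℤ) ∣ (r : ℤ) * p := Dvd.dvd.mul_right (Int.natCast_dvd_natCast.mpr hPr) _
      have hrp2 : (P : ℤ) ∣ (r : ℤ) ^ 2 * p := by
        have : (P : ℤ) ∣ (r : ℤ) ^ 2 := (Int.natCast_dvd_natCast.mpr hPr).trans ⟨r, by ring⟩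
        exact this.mul_right _
      constructor
      · intro h
        have : (P : ℤ) ∣ (q : ℤ) := by
          have := dvd_sub hrp h
          simpa using this
        exact hPq' (Int.natCast_dvd_natCast.mp this)
      · intro h
        have : (P : ℤ) ∣ (q : ℤ) := by
          have := dvd_sub h hrp2
          simpa using this
        exact hPq' (Int.natCast_dvd_natCast.mp this)
  have conc : ∀ a : ℤ, (∀ P : ℕ, P.Prime → P ∣ 2 * N → ¬ (P : ℤ) ∣ a) →
      Int.gcd a (2 * N) = 1 := by
    intro a h
    by_contra hg
    obtain ⟨P, hP, hPd⟩ := Nat.exists_prime_and_dvd hg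
    have h1 : (P : ℤ) ∣ a :=
      (Int.natCast_dvd_natCast.mpr hPd).trans (Int.gcd_dvd_left _ _)
    have h2 : P ∣ 2 * N := by
      have := hPd.trans (Nat.gcd_dvd_right ((a).natAbs) (((2 : ℤ) * N).natAbs))
      simpa [Int.natAbs_mul] using this
    exact h P hP h2 h1
  refine ⟨⟨conc _ (fun P hP hd => (key P hP hd).1), conc _ (fun P hP hd => (key P hP hd).2)⟩,
    ⟨(r : ℤ), conc _ (fun P hP hd => (key P hP hd).1), conc _ (fun P hP hd => (key P hP hd).2)⟩⟩
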